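/- Let B be an abelian Lie subalgebra of gl(n,K), G = B ⋉ K^n the semidirect product Lie algebra, and suppose α ∈ G* vanishes on B and its restriction to K^n has an open orbit, i.e., there is a basis (a₁,…,a_n) of B such that (α∘a₁, …, α∘a_n) is a basis of (K^n)*. Then the Chevalley–Eilenberg coboundary ω = ∂α, defined by ω(u,v) = −α([u,v]), is a nondegenerate alternating bilinear form on G. In particular G is a Frobenius (exact symplectic) Lie algebra. -/

import Mathlib

open Matrix

/-- on `G = B ⋉ Kⁿ`, if `α` vanishes on `B` and its restriction to
`Kⁿ` has an open contragredient orbit (the forms `α ∘ aᵢ` form a basis of the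
dual for some basis `aᵢ` of `B`), then `∂α(u,v) = −α([u,v])` is a nondegenerate
alternating form, i.e. `G` is Frobenius. -/
theorem stmt7 {K : Type*} [Field K] {n : ℕ}
    (B : Submodule K (Matrix (Fin n) (Fin n) K))
    (hcomm : ∀ a ∈ B, ∀ b ∈ B, a * b = b * a)
    (α : (Fin n → K) →ₗ[K] K)
    (a : Module.Basis (Fin n) K B)
    (hb : ∃ b : Module.Basis (Fin n) K (Module.Dual K (Fin n → K)),
      ∀ i : Fin n, b i = α ∘ₗ Matrix.mulVecLin ((a i : Matrix (Fin n) (Fin n) K)))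
    -- `ω u v = −α([u,v])` on `G = B × Kⁿ`
    (ω : (B × (Fin n → K)) → (B × (Fin n → K)) → K)
    (hω : ∀ u v : B × (Fin n → K),
      ω u v = -α (Matrix.mulVec (u.1 : Matrix (Fin n) (Fin n) K) v.2
                  - Matrix.mulVec (v.1 : Matrix (Fin n) (Fin n) K) u.2)) :
    (∀ u : B × (Fin n → K), ω u u = 0) ∧
    (∀ u : B × (Fin n → K), (∀ v, ω u v = 0) → u = 0) := by
  obtain ⟨b, hbL⟩ := hb
  constructor
  · intro u
    rw [hω]
    simp
  · intro u hu
    have hL : ∀ x : Fin n → K, α ((u.1 : Matrix (Fin n) (Fin n) K).mulVec x) = 0 := by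
      intro x
      have h := hu (0, x)
      rw [hω] at h
      simpa using h
    -- express u.1 in the basis a
    have hsum : (u.1 : Matrix (Fin n) (Fin n) K)
        = ∑ i, a.repr u.1 i • ((a i : B) : Matrix (Fin n) (Fin n) K) := by
      conv_lhs => rw [← a.sum_repr u.1]
      push_cast
      rfl
    have key : ∀ x : Fin n → K, α ((u.1 : Matrix (Fin n) (Fin n) K) *ᵥ x)
        = ∑ i, a.repr u.1 i • α (((a i : B) : Matrix (Fin n) (Fin n) K) *ᵥ x) := by
      intro x
      have h1 : Matrix.toLin' (u.1 : Matrix (Fin n) (Fin n) K)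
          = ∑ i, a.repr u.1 i • Matrix.toLin' ((a i : B) : Matrix (Fin n) (Fin n) K) := by
        rw [hsum, map_sum]
        simp only [_root_.map_smul]
      have h2 := congrFun (congrArg (fun f : (Fin n → K) →ₗ[K] (Fin n → K) => ⇑f) h1) x
      simp only [Matrix.toLin'_apply, LinearMap.coe_sum, Finset.sum_apply,
        LinearMap.smul_apply] at h2
      rw [h2, map_sum]
      simp only [_root_.map_smul]
    have hrep : ∀ j, a.repr u.1 j = 0 := by
      have hzero : ∑ i, a.repr u.1 i • b i = 0 := by
        apply LinearMap.ext
        intro x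
        simp only [LinearMap.coe_sum, Finset.sum_apply, LinearMap.smul_apply,
          LinearMap.zero_apply, hbL, LinearMap.coe_comp, Function.comp_apply,
          mulVecLin_apply, smul_eq_mul]
        have := key x
        simp only [smul_eq_mul] at this
        rw [← this, hL]
      intro j
      exact Fintype.linearIndependent_iff.mp b.linearIndependent _ hzero j
    have h1 : u.1 = 0 := by
      have := a.sum_repr u.1
      rw [← this]
      simp [hrep]
    have h2 : u.2 = 0 := by
      rw [← Module.forall_dual_apply_eq_zero_iff K u.2]
      intro φ
      have hbi : ∀ i, b i u.2 = 0 := by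
        intro i
        have h := hu (a i, 0)
        rw [hω] at h
        rw [hbL]
        simp only [LinearMap.coe_comp, Function.comp_apply, mulVecLin_apply]
        simpa using h
      have := b.sum_repr φ
      rw [← this]
      simp only [LinearMap.coe_sum, Finset.sum_apply, LinearMap.smul_apply, hbi, smul_zero,
        Finset.sum_const_zero]
    exact Prod.ext h1 h2
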